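/- If f : ℝⁿ → ℝ is strictly convex, differentiable, and 1-coercive, then the gradient map ∇f is a continuous bijection from ℝⁿ onto ℝⁿ with continuous inverse. -/

import Mathlib

open Filter Set Topology RealInnerProductSpace

noncomputable def fenchel {n : ℕ} (f : EuclideanSpace ℝ (Fin n) → ℝ)
    (y : EuclideanSpace ℝ (Fin n)) : ℝ :=
  sSup (Set.range fun x => ⟪y, x⟫ - f x)

def Coercive1 {n : ℕ} (f : EuclideanSpace ℝ (Fin n) → ℝ) : Prop :=
  Tendsto (fun x => f x / ‖x‖) (Filter.comap norm Filter.atTop) Filter.atTop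

variable {n : ℕ}

local notation "E" => EuclideanSpace ℝ (Fin n)

lemma grad_le {f : E → ℝ} {g x : E} (hconv : ConvexOn ℝ Set.univ f)
    (hg : HasGradientAt f g x) (y : E) : f x + ⟪g, y - x⟫ ≤ f y := by
  have hline : HasDerivAt (fun t : ℝ => x + t • (y - x)) ((1:ℝ) • (y - x)) 0 :=
    ((hasDerivAt_id (0:ℝ)).smul_const (y - x)).const_add x
  have hφ : HasDerivAt (fun t : ℝ => f (x + t • (y - x))) ⟪g, y - x⟫ 0 := by
    have hF : HasFDerivAt f (InnerProductSpace.toDual ℝ _ g) (x + (0:ℝ) • (y - x)) := by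
      simpa using hg.hasFDerivAt
    have hc := hF.comp_hasDerivAt 0 hline
    simp [InnerProductSpace.toDual_apply_apply] at hc
    exact hc
  have hslope : Tendsto (slope (fun t : ℝ => f (x + t • (y - x))) 0) (𝓝[>] 0)
      (𝓝 ⟪g, y - x⟫) :=
    (hasDerivAt_iff_tendsto_slope.mp hφ).mono_left
      (nhdsWithin_mono _ (fun t ht => ne_of_gt ht))
  have hev : ∀ᶠ t in 𝓝[>] (0:ℝ), slope (fun t : ℝ => f (x + t • (y - x))) 0 t ≤ f y - f x := by
    filter_upwards [Ioo_mem_nhdsGT_of_mem (by constructor <;> norm_num : (0:ℝ) ∈ Set.Ico 0 1)]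
      with t ht
    have hcvx := hconv.2 (Set.mem_univ x) (Set.mem_univ y) (by linarith [ht.2] : (0:ℝ) ≤ 1 - t)
      ht.1.le (by ring)
    have hxy : (1 - t) • x + t • y = x + t • (y - x) := by module
    rw [hxy] at hcvx
    rw [slope_def_field, sub_zero]
    simp only [zero_smul, add_zero]
    rw [div_le_iff₀ ht.1]
    simp only [smul_eq_mul] at hcvx
    nlinarith [ht.1]
  linarith [le_of_tendsto hslope hev]

lemma subgrad_unique {f : E → ℝ} {d g x : E} (hd : HasGradientAt f d x)
    (hg : ∀ y, f x + ⟪g, y - x⟫ ≤ f y) : g = d := by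
  have key : ∀ v : E, ⟪g, v⟫ ≤ ⟪d, v⟫ := by
    intro v
    have hline : HasDerivAt (fun t : ℝ => x + t • v) ((1:ℝ) • v) 0 :=
      ((hasDerivAt_id (0:ℝ)).smul_const v).const_add x
    have hφ : HasDerivAt (fun t : ℝ => f (x + t • v)) ⟪d, v⟫ 0 := by
      have hF : HasFDerivAt f (InnerProductSpace.toDual ℝ _ d) (x + (0:ℝ) • v) := by
        simpa using hd.hasFDerivAt
      have hc := hF.comp_hasDerivAt 0 hline
      simp [InnerProductSpace.toDual_apply_apply] at hc
      exact hc
    have hslope : Tendsto (slope (fun t : ℝ => f (x + t • v)) 0) (𝓝[>] 0) (𝓝 ⟪d, v⟫) :=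
      (hasDerivAt_iff_tendsto_slope.mp hφ).mono_left
        (nhdsWithin_mono _ (fun t ht => ne_of_gt ht))
    have hev : ∀ᶠ t in 𝓝[>] (0:ℝ), ⟪g, v⟫ ≤ slope (fun t : ℝ => f (x + t • v)) 0 t := by
      filter_upwards [self_mem_nhdsWithin] with t ht
      have := hg (x + t • v)
      rw [add_sub_cancel_left, real_inner_smul_right] at this
      rw [slope_def_field, sub_zero, le_div_iff₀ ht]
      simp only [zero_smul, add_zero]
      nlinarith
    exact ge_of_tendsto hslope hev
  have h2 := key (g - d)
  have h3 : ⟪g - d, g - d⟫ ≤ 0 := by rw [inner_sub_left]; linarith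
  exact sub_eq_zero.mp (real_inner_self_nonpos.mp h3)

lemma grad_lt {f : E → ℝ} {f' : E → E} (hsc : StrictConvexOn ℝ Set.univ f)
    (hdiff : ∀ x, HasGradientAt f (f' x) x) {x y : E} (hxy : x ≠ y) :
    f x + ⟪f' x, y - x⟫ < f y := by
  have hm := hsc.2 (Set.mem_univ x) (Set.mem_univ y) hxy (by norm_num : (0:ℝ) < 1/2)
    (by norm_num : (0:ℝ) < 1/2) (by norm_num)
  have hle := grad_le hsc.convexOn (hdiff x) ((1/2 : ℝ) • x + (1/2 : ℝ) • y)
  have hsub : (1/2 : ℝ) • x + (1/2 : ℝ) • y - x = (1/2 : ℝ) • (y - x) := by module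
  rw [hsub, real_inner_smul_right] at hle
  simp only [smul_eq_mul] at hm
  linarith

lemma grad_mono {f : E → ℝ} {f' : E → E} (hsc : StrictConvexOn ℝ Set.univ f)
    (hdiff : ∀ x, HasGradientAt f (f' x) x) {x y : E} (hxy : x ≠ y) :
    0 < ⟪f' y - f' x, y - x⟫ := by
  have h1 := grad_lt hsc hdiff hxy
  have h2 := grad_lt hsc hdiff hxy.symm
  have h3 : ⟪f' y, x - y⟫ = -⟪f' y, y - x⟫ := by
    rw [← inner_neg_right, neg_sub]
  rw [h3] at h2
  rw [inner_sub_left]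
  linarith

lemma coer_ge {f : E → ℝ} (hcoer : Coercive1 f) (M : ℝ) :
    ∃ R : ℝ, 1 ≤ R ∧ ∀ x : E, R ≤ ‖x‖ → M * ‖x‖ ≤ f x := by
  have h := hcoer.eventually_ge_atTop M
  rw [eventually_comap, eventually_atTop] at h
  obtain ⟨R, hR⟩ := h
  refine ⟨max R 1, le_max_right _ _, fun x hx => ?_⟩
  have hnorm : (0:ℝ) < ‖x‖ := lt_of_lt_of_le (lt_of_lt_of_le one_pos (le_max_right R 1)) hx
  have h2 := hR ‖x‖ (le_trans (le_max_left R 1) hx) x rfl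
  rw [le_div_iff₀ hnorm] at h2
  linarith

lemma grad_bound {f : E → ℝ} {f' : E → E} (hconv : ConvexOn ℝ Set.univ f)
    (hdiff : ∀ x, HasGradientAt f (f' x) x) (x₀ : E) :
    ∃ B : ℝ, ∀ x ∈ Metric.closedBall x₀ 1, ‖f' x‖ ≤ B := by
  have hc : Continuous f := continuous_iff_continuousAt.2 fun x => (hdiff x).continuousAt
  obtain ⟨zM, hzMmem, hzM⟩ := (isCompact_closedBall x₀ 2).exists_isMaxOn
    ⟨x₀, by simp⟩ hc.continuousOn
  obtain ⟨zm, hzmmem, hzm⟩ := (isCompact_closedBall x₀ 2).exists_isMinOn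
    ⟨x₀, by simp⟩ hc.continuousOn
  refine ⟨f zM - f zm, fun x hx => ?_⟩
  have hx2 : x ∈ Metric.closedBall x₀ 2 :=
    Metric.closedBall_subset_closedBall (by norm_num) hx
  rcases eq_or_ne (f' x) 0 with h0 | h0
  · rw [h0, norm_zero]
    have h5 : f zm ≤ f zM := hzm hzMmem
    linarith
  · set u : E := ‖f' x‖⁻¹ • f' x with hu
    have hnu : ‖u‖ = 1 := by
      rw [hu, norm_smul, norm_inv, norm_norm, inv_mul_cancel₀ (norm_ne_zero_iff.mpr h0)]
    have hmem : x + u ∈ Metric.closedBall x₀ 2 := by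
      rw [Metric.mem_closedBall] at *
      calc dist (x + u) x₀ ≤ dist (x + u) x + dist x x₀ := dist_triangle _ _ _
        _ ≤ 1 + 1 := by
            rw [dist_eq_norm, add_sub_cancel_left, hnu]
            exact add_le_add le_rfl hx
        _ ≤ 2 := by norm_num
  
    have h1 := grad_le hconv (hdiff x) (x + u)
    rw [add_sub_cancel_left, hu, real_inner_smul_right,
      real_inner_self_eq_norm_mul_norm] at h1
    have h2 : ‖f' x‖⁻¹ * (‖f' x‖ * ‖f' x‖) = ‖f' x‖ := by
      field_simp
    rw [h2] at h1
    have h3 : f (x + u) ≤ f zM := hzM hmem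
    have h4 : f zm ≤ f x := hzm hx2
    linarith

set_option maxHeartbeats 1000000 in
theorem stmt3 {n : ℕ} (f : EuclideanSpace ℝ (Fin n) → ℝ)
    (f' : EuclideanSpace ℝ (Fin n) → EuclideanSpace ℝ (Fin n))
    (hsc : StrictConvexOn ℝ Set.univ f) (hdiff : ∀ x, HasGradientAt f (f' x) x)
    (hcoer : Coercive1 f) :
    Continuous f' ∧ Function.Bijective f' ∧ Continuous (Function.invFun f') := by
  have hconv := hsc.convexOn
  have hcontf : Continuous f := continuous_iff_continuousAt.2 fun x => (hdiff x).continuousAt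
  -- injectivity
  have hinj : Function.Injective f' := by
    intro a b hab
    by_contra hne
    have h := grad_mono hsc hdiff hne
    rw [hab, sub_self, inner_zero_left] at h
    exact lt_irrefl 0 h
  -- surjectivity
  have hsurj : Function.Surjective f' := by
    intro y
    set g : EuclideanSpace ℝ (Fin n) → ℝ := fun x => f x - ⟪y, x⟫ with hgdef
    have hgdiff : ∀ x, HasGradientAt g (f' x - y) x := by
      intro x
      rw [hasGradientAt_iff_hasFDerivAt]
      have h2 : HasFDerivAt (fun z : EuclideanSpace ℝ (Fin n) => (⟪y, z⟫ : ℝ))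
          ((InnerProductSpace.toDual ℝ (EuclideanSpace ℝ (Fin n)) y) : EuclideanSpace ℝ (Fin n) →L[ℝ] ℝ) x :=
        (InnerProductSpace.toDual ℝ (EuclideanSpace ℝ (Fin n)) y).hasFDerivAt
      have h3 := (hdiff x).hasFDerivAt.sub h2
      have h4 : InnerProductSpace.toDual ℝ (EuclideanSpace ℝ (Fin n)) (f' x - y)
          = InnerProductSpace.toDual ℝ (EuclideanSpace ℝ (Fin n)) (f' x) - InnerProductSpace.toDual ℝ (EuclideanSpace ℝ (Fin n)) y :=
        map_sub _ _ _
      rw [h4]; exact h3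
    have hcontg : Continuous g := hcontf.sub (continuous_const.inner continuous_id)
    obtain ⟨R, hR1, hR⟩ := coer_ge hcoer (‖y‖ + |f 0| + 1)
    obtain ⟨x₀, hx₀mem, hx₀⟩ := (isCompact_closedBall (0 : EuclideanSpace ℝ (Fin n)) R).exists_isMinOn
      ⟨0, by simpa using le_trans zero_le_one hR1⟩ hcontg.continuousOn
    have hg0 : (0 : EuclideanSpace ℝ (Fin n)) ∈ Metric.closedBall (0 : EuclideanSpace ℝ (Fin n)) R := by
      simpa using le_trans zero_le_one hR1
    have hmin : IsMinOn g Set.univ x₀ := by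
      intro x _
      by_cases hx : ‖x‖ ≤ R
      · exact hx₀ (by simpa [Metric.mem_closedBall, dist_zero_right] using hx)
      · push_neg at hx
        have h1 := hR x hx.le
        have hip : ⟪y, x⟫ ≤ ‖y‖ * ‖x‖ := real_inner_le_norm y x
        have h0 : (1:ℝ) ≤ ‖x‖ := le_trans hR1 hx.le
        have hgx0 : g x₀ ≤ g 0 := hx₀ hg0
        have hg0v : g 0 = f 0 := by simp [hgdef]
        have : g 0 ≤ g x := by
          rw [hg0v]
          show f 0 ≤ f x - ⟪y, x⟫
          nlinarith [le_abs_self (f 0), abs_nonneg (f 0), norm_nonneg y]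
        show g x₀ ≤ g x
        linarith
    have hloc : IsLocalMin g x₀ := hmin.isLocalMin Filter.univ_mem
    have hz := hloc.hasFDerivAt_eq_zero (hgdiff x₀).hasFDerivAt
    refine ⟨x₀, ?_⟩
    have : f' x₀ - y = 0 :=
      (InnerProductSpace.toDual ℝ (EuclideanSpace ℝ (Fin n))).map_eq_zero_iff.mp hz
    have h := sub_eq_zero.mp this
    exact h
  -- continuity of f'
  have hcont : Continuous f' := by
    rw [continuous_iff_continuousAt]
    intro x₀
    rw [ContinuousAt, tendsto_iff_seq_tendsto]
    intro u hu
    apply tendsto_of_subseq_tendsto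
    intro ns hns
    have hv : Tendsto (fun k => u (ns k)) atTop (𝓝 x₀) := hu.comp hns
    obtain ⟨B, hB⟩ := grad_bound hconv hdiff x₀
    have hmem : ∀ᶠ k in atTop, u (ns k) ∈ Metric.closedBall x₀ 1 :=
      hv.eventually_mem (Metric.closedBall_mem_nhds x₀ one_pos)
    obtain ⟨N, hN⟩ := eventually_atTop.mp hmem
    set w : ℕ → EuclideanSpace ℝ (Fin n) := fun k => u (ns (k + N)) with hw
    have hw1 : ∀ k, w k ∈ Metric.closedBall x₀ 1 := fun k => hN (k + N) (Nat.le_add_left _ _)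
    have hw2 : Tendsto w atTop (𝓝 x₀) := hv.comp (tendsto_add_atTop_nat N)
    have hbdd : ∀ k, f' (w k) ∈ Metric.closedBall (0 : EuclideanSpace ℝ (Fin n)) B := fun k => by
      simpa [dist_zero_right] using hB _ (hw1 k)
    obtain ⟨g, -, φ, hφmono, hφ⟩ :=
      tendsto_subseq_of_bounded Metric.isBounded_closedBall hbdd
    have h1 : Tendsto (fun k => w (φ k)) atTop (𝓝 x₀) := hw2.comp hφmono.tendsto_atTop
    have hsubg : ∀ z, f x₀ + ⟪g, z - x₀⟫ ≤ f z := by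
      intro z
      have hlim : Tendsto (fun k => f (w (φ k)) + ⟪f' (w (φ k)), z - w (φ k)⟫) atTop
          (𝓝 (f x₀ + ⟪g, z - x₀⟫)) :=
        ((hcontf.tendsto x₀).comp h1).add (hφ.inner (tendsto_const_nhds.sub h1))
      exact le_of_tendsto hlim
        (Filter.Eventually.of_forall fun k => grad_le hconv (hdiff _) z)
    have hgeq : g = f' x₀ := subgrad_unique (hdiff x₀) hsubg
    exact ⟨fun k => φ k + N, by rw [← hgeq]; exact hφ⟩
  refine ⟨hcont, ⟨hinj, hsurj⟩, ?_⟩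
  -- continuity of inverse
  have hinv_right : ∀ y, f' (Function.invFun f' y) = y := fun y => Function.invFun_eq (hsurj y)
  rw [continuous_iff_continuousAt]
  intro y₀
  rw [ContinuousAt, tendsto_iff_seq_tendsto]
  intro s hs
  set q : EuclideanSpace ℝ (Fin n) → EuclideanSpace ℝ (Fin n) := Function.invFun f' with hq
  obtain ⟨R, hR1, hR⟩ := coer_ge hcoer (‖y₀‖ + |f 0| + 2)
  have hkey : ∀ x : EuclideanSpace ℝ (Fin n), R ≤ ‖x‖ → ‖y₀‖ + 2 ≤ ‖f' x‖ := by
    intro x hx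
    have h1 := hR x hx
    have h2 : f x - f 0 ≤ ⟪f' x, x⟫ := by
      have h := grad_le hconv (hdiff x) 0
      rw [zero_sub, inner_neg_right] at h
      linarith
    have h3 : ⟪f' x, x⟫ ≤ ‖f' x‖ * ‖x‖ := real_inner_le_norm _ _
    have h4 : (1:ℝ) ≤ ‖x‖ := le_trans hR1 hx
    nlinarith [le_abs_self (f 0), abs_nonneg (f 0), norm_nonneg (f' x), norm_nonneg y₀]
  have hyb : ∀ᶠ k in atTop, ‖s k‖ ≤ ‖y₀‖ + 1 := by
    have hn : Tendsto (fun k => ‖s k‖) atTop (𝓝 ‖y₀‖) := hs.norm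
    exact hn.eventually (eventually_le_nhds (lt_add_one ‖y₀‖))
  have hqb : ∀ᶠ k in atTop, ‖q (s k)‖ ≤ R := by
    filter_upwards [hyb] with k hk
    by_contra h
    push_neg at h
    have h2 := hkey (q (s k)) h.le
    rw [hinv_right (s k)] at h2
    linarith
  apply tendsto_of_subseq_tendsto
  intro ns hns
  obtain ⟨N, hN⟩ := eventually_atTop.mp (hns.eventually hqb)
  set w : ℕ → EuclideanSpace ℝ (Fin n) := fun k => q (s (ns (k + N))) with hw
  have hw1 : ∀ k, w k ∈ Metric.closedBall (0 : EuclideanSpace ℝ (Fin n)) R := fun k => by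
    simpa [dist_zero_right] using hN (k + N) (Nat.le_add_left _ _)
  obtain ⟨xs, -, φ, hφmono, hφ⟩ := tendsto_subseq_of_bounded Metric.isBounded_closedBall hw1
  have h3 : Tendsto (fun k => s (ns (φ k + N))) atTop (𝓝 y₀) :=
    hs.comp (hns.comp ((tendsto_add_atTop_nat N).comp hφmono.tendsto_atTop))
  have h1 : Tendsto (fun k => f' (w (φ k))) atTop (𝓝 (f' xs)) := (hcont.tendsto _).comp hφ
  have h2 : (fun k => f' (w (φ k))) = fun k => s (ns (φ k + N)) :=
    funext fun k => hinv_right _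
  have hfxs : f' xs = y₀ := tendsto_nhds_unique (h2 ▸ h1) h3
  have hxs : xs = q y₀ := hinj (by rw [hfxs, hinv_right])
  exact ⟨fun k => φ k + N, by rw [← hxs]; exact hφ⟩
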